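/- Let θ, φ, α ∈ ℝ. In the quaternions, with u = j·cos θ + k·sin θ, one has exp(φ·u)·exp(-α θ·i) = cos φ · exp(-α θ·i) + sin φ · exp((α+1) θ·i)·j. -/

import Mathlib

/-- The quaternion unit `i`. -/
noncomputable def qi : Quaternion ℝ := ⟨0, 1, 0, 0⟩

/-- The quaternion unit `j`. -/
noncomputable def qj : Quaternion ℝ := ⟨0, 0, 1, 0⟩

/-- The quaternion unit `k`. -/
noncomputable def qk : Quaternion ℝ := ⟨0, 0, 0, 1⟩

@[simp] lemma qi_re : qi.re = 0 := rfl
@[simp] lemma qi_imI : qi.imI = 1 := rfl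
@[simp] lemma qi_imJ : qi.imJ = 0 := rfl
@[simp] lemma qi_imK : qi.imK = 0 := rfl
@[simp] lemma qj_re : qj.re = 0 := rfl
@[simp] lemma qj_imI : qj.imI = 0 := rfl
@[simp] lemma qj_imJ : qj.imJ = 1 := rfl
@[simp] lemma qj_imK : qj.imK = 0 := rfl
@[simp] lemma qk_re : qk.re = 0 := rfl
@[simp] lemma qk_imI : qk.imI = 0 := rfl
@[simp] lemma qk_imJ : qk.imJ = 0 := rfl
@[simp] lemma qk_imK : qk.imK = 1 := rfl

lemma exp_smul_unit (t : ℝ) (v : Quaternion ℝ) (hre : v.re = 0) (hv : ‖v‖ = 1) :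
    NormedSpace.exp (t • v) = (Real.cos t : Quaternion ℝ) + Real.sin t • v := by
  have hre' : (t • v).re = 0 := by simp [hre]
  rw [Quaternion.exp_of_re_eq_zero _ hre']
  have hn : ‖t • v‖ = |t| := by rw [norm_smul, hv, mul_one, Real.norm_eq_abs]
  rw [hn, smul_smul]
  have h1 : Real.cos |t| = Real.cos t := by rcases abs_choice t with h | h <;> simp [h]
  have h2 : Real.sin |t| / |t| * t = Real.sin t := by
    rcases eq_or_ne t 0 with h | h
    · simp [h]
    · have : Real.sin |t| / |t| = Real.sin t / t := by
        rcases abs_choice t with ha | ha <;> rw [ha] <;>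
          simp [Real.sin_neg, neg_div_neg_eq]
      rw [this, div_mul_cancel₀ _ h]
  rw [h1, h2]

/-- The commutation lemma in the quaternions: with `u = j cos θ + k sin θ`,
`exp(φ u) exp(-αθ i) = cos φ · exp(-αθ i) + sin φ · exp((α+1)θ i) j`. -/
theorem quaternion_commutation (θ φ α : ℝ) :
    NormedSpace.exp (φ • (Real.cos θ • qj + Real.sin θ • qk)) *
        NormedSpace.exp ((-(α * θ)) • qi) =
      (Real.cos φ : Quaternion ℝ) * NormedSpace.exp ((-(α * θ)) • qi) +
        (Real.sin φ : Quaternion ℝ) * (NormedSpace.exp (((α + 1) * θ) • qi) * qj) := by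
  have hi_re : qi.re = 0 := rfl
  have norm_one : ∀ q : Quaternion ℝ, Quaternion.normSq q = 1 → ‖q‖ = 1 := by
    intro q hq
    have h := (Quaternion.normSq_eq_norm_mul_self q).symm
    nlinarith [norm_nonneg q]
  have hi_norm : ‖qi‖ = 1 := by
    apply norm_one; simp [Quaternion.normSq_def']
  have hu_re : (Real.cos θ • qj + Real.sin θ • qk).re = 0 := by simp
  have hu_norm : ‖Real.cos θ • qj + Real.sin θ • qk‖ = 1 := by
    apply norm_one
    simp [Quaternion.normSq_def', Real.sin_sq_add_cos_sq]
  rw [exp_smul_unit _ _ hu_re hu_norm, exp_smul_unit _ _ hi_re hi_norm,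
    exp_smul_unit _ _ hi_re hi_norm]
  ext <;>
    simp [Quaternion.ext_iff, Real.cos_neg, Real.sin_neg, add_mul,
      Real.cos_add, Real.sin_add] <;> ring
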